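/- Let G be a finite p-group and write it as an internal direct product G = K × L of normal subgroups K and L. Let F be a field and Δ = Δ(FG) the augmentation ideal. Then for every positive integer n, Δ^n = Δ(FK)·Δ^{n−1} ⊕ Δ(FL)^n, where Δ(FK) is the ideal of FG generated by { k − 1 : k ∈ K } and Δ(FL)^n is the n-th power of the augmentation ideal of FL viewed inside FG. -/

import Mathlib

open MonoidAlgebra Submodule Pointwise

theorem aug_power_decomposition_direct_product
    (p : ℕ) [Fact p.Prime] (F : Type*) [Field F]
    (G : Type*) [Group G] [Finite G] (hG : IsPGroup p G)
    (K L : Subgroup G) [K.Normal] [L.Normal]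
    (hKL : K ⊓ L = ⊥) (hKL' : K ⊔ L = ⊤) (n : ℕ) (hn : 0 < n) :
    let Δ : Submodule F (MonoidAlgebra F G) :=
      Submodule.span F {a | ∃ g : G, a = MonoidAlgebra.of F G g - 1}
    let DK : Submodule F (MonoidAlgebra F G) :=
      Submodule.span F {a | ∃ k ∈ K, a = MonoidAlgebra.of F G k - 1} * ⊤
    let DL : Submodule F (MonoidAlgebra F G) :=
      Submodule.span F {a | ∃ l ∈ L, a = MonoidAlgebra.of F G l - 1}
    Δ ^ n = DK * Δ ^ (n - 1) ⊔ DL ^ n ∧ (DK * Δ ^ (n - 1)) ⊓ DL ^ n = ⊥ := by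
  classical
  intro Δ DK DL
  set SK : Submodule F (MonoidAlgebra F G) :=
    Submodule.span F {a | ∃ k ∈ K, a = MonoidAlgebra.of F G k - 1} with hSKdef
  have hDK : DK = SK * ⊤ := rfl
  -- key : multiplying a generator of Δ by anything stays in Δ
  have key : ∀ (g : G) (y : MonoidAlgebra F G), (MonoidAlgebra.of F G g - 1) * y ∈ Δ := by
    intro g y
    induction y using MonoidAlgebra.induction_linear with
    | zero => simpa using Δ.zero_mem
    | add a b ha hb => rw [mul_add]; exact Δ.add_mem ha hb
    | single a b =>
      have hs : (MonoidAlgebra.single a b : MonoidAlgebra F G) = b • MonoidAlgebra.of F G a := by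
        simp [MonoidAlgebra.of_apply, MonoidAlgebra.smul_single']
      rw [hs, mul_smul_comm]
      refine Δ.smul_mem _ ?_
      have : (MonoidAlgebra.of F G g - 1) * MonoidAlgebra.of F G a
          = (MonoidAlgebra.of F G (g * a) - 1) - (MonoidAlgebra.of F G a - 1) := by
        rw [sub_mul, one_mul, ← map_mul]; abel
      rw [this]
      exact Δ.sub_mem (subset_span ⟨g * a, rfl⟩) (subset_span ⟨a, rfl⟩)
  have hΔtop : Δ * ⊤ ≤ Δ := by
    rw [Submodule.mul_le]
    intro m hm y _
    induction hm using Submodule.span_induction with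
    | mem x hx => obtain ⟨g, rfl⟩ := hx; exact key g y
    | zero => simpa using Δ.zero_mem
    | add a b _ _ ha hb => rw [add_mul]; exact Δ.add_mem ha hb
    | smul c a _ ha => rw [smul_mul_assoc]; exact Δ.smul_mem c ha
  have hSKΔ : SK ≤ Δ := by
    rw [span_le]; rintro x ⟨k, hk, rfl⟩; exact subset_span ⟨k, rfl⟩
  have hDKΔ : DK ≤ Δ := by
    rw [hDK]
    calc SK * ⊤ ≤ Δ * ⊤ := mul_le_mul_left hSKΔ _
    _ ≤ Δ := hΔtop
  have hDLΔ : DL ≤ Δ := by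
    rw [span_le]; rintro x ⟨l, hl, rfl⟩; exact subset_span ⟨l, rfl⟩
  -- Δ ≤ DK ⊔ DL
  have hsplit : Δ ≤ DK ⊔ DL := by
    rw [span_le]
    rintro x ⟨g, rfl⟩
    have hg : g ∈ (K : Set G) * (L : Set G) := by
      rw [← Subgroup.mul_normal K L, hKL']; trivial
    obtain ⟨k, hk, l, hl, rfl⟩ := hg
    have hdecomp : MonoidAlgebra.of F G (k * l) - 1
        = (MonoidAlgebra.of F G k - 1) * MonoidAlgebra.of F G l
          + (MonoidAlgebra.of F G l - 1) := by
      rw [sub_mul, one_mul, ← map_mul]; abel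
    rw [SetLike.mem_coe, hdecomp]
    refine add_mem (le_sup_left (α := Submodule F (MonoidAlgebra F G)) ?_)
      (le_sup_right (α := Submodule F (MonoidAlgebra F G)) ?_)
    · exact Submodule.mul_mem_mul (subset_span ⟨k, hk, rfl⟩) trivial
    · exact subset_span ⟨l, hl, rfl⟩
  -- commutation : DL * SK ≤ SK * DL
  have hcomm : ∀ (k l : G), k ∈ K → l ∈ L →
      MonoidAlgebra.of F G l * MonoidAlgebra.of F G k
        = MonoidAlgebra.of F G k * MonoidAlgebra.of F G l := by
    intro k l hk hl
    rw [← map_mul, ← map_mul]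
    congr 1
    exact (Subgroup.commute_of_normal_of_disjoint K L ‹_› ‹_› (disjoint_iff.2 hKL) k l hk hl).symm
  have hLSK : DL * SK ≤ SK * DL := by
    rw [Submodule.mul_le]
    intro a ha
    induction ha using Submodule.span_induction with
    | mem x hx =>
      obtain ⟨l, hl, rfl⟩ := hx
      intro b hb
      induction hb using Submodule.span_induction with
      | mem y hy =>
        obtain ⟨k, hk, rfl⟩ := hy
        have hc : Commute (MonoidAlgebra.of F G l) (MonoidAlgebra.of F G k) :=
          hcomm k l hk hl
        have : (MonoidAlgebra.of F G l - 1) * (MonoidAlgebra.of F G k - 1)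
            = (MonoidAlgebra.of F G k - 1) * (MonoidAlgebra.of F G l - 1) :=
          (Commute.sub_left (hc.sub_right (Commute.one_right _)) (Commute.one_left _)).eq
        rw [this]
        exact Submodule.mul_mem_mul (subset_span ⟨k, hk, rfl⟩) (subset_span ⟨l, hl, rfl⟩)
      | zero => simpa using (SK * DL).zero_mem
      | add u v _ _ hu hv => rw [mul_add]; exact add_mem hu hv
      | smul c u _ hu => rw [mul_smul_comm]; exact Submodule.smul_mem _ c hu
    | zero => intro b _; simpa using (SK * DL).zero_mem
    | add u v _ _ hu hv => intro b hb; rw [add_mul]; exact add_mem (hu b hb) (hv b hb)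
    | smul c u _ hu => intro b hb; rw [smul_mul_assoc]; exact Submodule.smul_mem _ c (hu b hb)
  have hLDK : DL * DK ≤ SK * Δ := by
    rw [hDK, ← mul_assoc]
    calc DL * SK * ⊤ ≤ SK * DL * ⊤ := mul_le_mul_left hLSK _
      _ = SK * (DL * ⊤) := mul_assoc _ _ _
      _ ≤ SK * Δ := mul_le_mul_right
          (le_trans (mul_le_mul_left hDLΔ _) hΔtop) _
  have hSKDK : ∀ (N : Submodule F (MonoidAlgebra F G)), SK * N ≤ DK * N := by
    intro N
    rw [hDK, mul_assoc]
    refine mul_le_mul_right ?_ _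
    calc N = 1 * N := (one_mul N).symm
      _ ≤ ⊤ * N := mul_le_mul_left le_top _
  -- forward inclusion by induction
  have forward : ∀ m : ℕ, 1 ≤ m → Δ ^ m ≤ DK * Δ ^ (m - 1) ⊔ DL ^ m := by
    intro m hm
    induction m, hm using Nat.le_induction with
    | base =>
      simpa using hsplit
    | succ m hm ih =>
      have hstep : Δ ^ (m + 1) = Δ * Δ ^ m := by rw [pow_succ']
      have h1 : DL * (DK * Δ ^ (m - 1)) ≤ DK * Δ ^ m := by
        calc DL * (DK * Δ ^ (m - 1)) = DL * DK * Δ ^ (m - 1) := (mul_assoc _ _ _).symm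
          _ ≤ SK * Δ * Δ ^ (m - 1) := mul_le_mul_left hLDK _
          _ = SK * (Δ * Δ ^ (m - 1)) := mul_assoc _ _ _
          _ = SK * Δ ^ m := by rw [← pow_succ', Nat.sub_add_cancel hm]
          _ ≤ DK * Δ ^ m := hSKDK _
      have h2 : DL * DL ^ m = DL ^ (m + 1) := (pow_succ' DL m).symm
      have h3 : DL * (DK * Δ ^ (m - 1) ⊔ DL ^ m) ≤ DK * Δ ^ m ⊔ DL ^ (m + 1) := by
        rw [← Submodule.add_eq_sup, mul_add, Submodule.add_eq_sup]
        exact sup_le (le_trans h1 le_sup_left) (le_of_eq h2 |>.trans le_sup_right)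
      rw [hstep, Nat.add_sub_cancel]
      calc Δ * Δ ^ m ≤ (DK ⊔ DL) * Δ ^ m := mul_le_mul_left hsplit _
        _ = DK * Δ ^ m ⊔ DL * Δ ^ m := by
            rw [← Submodule.add_eq_sup, ← Submodule.add_eq_sup, add_mul]
        _ ≤ DK * Δ ^ m ⊔ DL * (DK * Δ ^ (m - 1) ⊔ DL ^ m) :=
            sup_le_sup_left (mul_le_mul_right ih _) _
        _ ≤ DK * Δ ^ m ⊔ (DK * Δ ^ m ⊔ DL ^ (m + 1)) := sup_le_sup_left h3 _
        _ = DK * Δ ^ m ⊔ DL ^ (m + 1) := by rw [← sup_assoc, sup_idem]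
  -- reverse inclusion
  have hDLpow : ∀ m : ℕ, DL ^ m ≤ Δ ^ m := by
    intro m
    induction m with
    | zero => simp
    | succ m ih => rw [pow_succ, pow_succ]; exact mul_le_mul' ih hDLΔ
  have reverse : DK * Δ ^ (n - 1) ⊔ DL ^ n ≤ Δ ^ n := by
    refine sup_le ?_ (hDLpow n)
    calc DK * Δ ^ (n - 1) ≤ Δ * Δ ^ (n - 1) := mul_le_mul_left hDKΔ _
      _ = Δ ^ n := by rw [← pow_succ', Nat.sub_add_cancel hn]
  refine ⟨le_antisymm (forward n hn) reverse, ?_⟩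
  -- intersection is trivial, via the retraction G →* G onto L
  · -- construct the projection
    have q := QuotientGroup.mk' K
    set φ : L →* G ⧸ K := (QuotientGroup.mk' K).comp L.subtype with hφdef
    have hφinj : Function.Injective φ := by
      intro a b hab
      have hab' : ((a : G) : G ⧸ K) = ((b : G) : G ⧸ K) := hab
      have h : (a : G)⁻¹ * (b : G) ∈ K := QuotientGroup.eq.mp hab'
      have hmem : (a : G)⁻¹ * (b : G) ∈ K ⊓ L := ⟨h, L.mul_mem (L.inv_mem a.2) b.2⟩
      rw [hKL, Subgroup.mem_bot, inv_mul_eq_one] at hmem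
      exact Subtype.ext hmem
    have hφsurj : Function.Surjective φ := by
      intro x
      obtain ⟨g, rfl⟩ := QuotientGroup.mk'_surjective K x
      have hg : g ∈ (K : Set G) * (L : Set G) := by
        rw [← Subgroup.mul_normal K L, hKL']; trivial
      obtain ⟨k, hk, l, hl, rfl⟩ := hg
      refine ⟨⟨l, hl⟩, ?_⟩
      show QuotientGroup.mk' K l = QuotientGroup.mk' K (k * l)
      rw [map_mul]
      have h1 : QuotientGroup.mk' K k = 1 := (QuotientGroup.eq_one_iff k).mpr hk
      rw [h1, one_mul]
    set e : L ≃* G ⧸ K := MulEquiv.ofBijective φ ⟨hφinj, hφsurj⟩ with hedef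
    set ρ : G →* G := L.subtype.comp (e.symm.toMonoidHom.comp (QuotientGroup.mk' K)) with hρdef
    have hρK : ∀ k ∈ K, ρ k = 1 := by
      intro k hk
      have h1 : QuotientGroup.mk' K k = 1 := (QuotientGroup.eq_one_iff k).mpr hk
      show L.subtype (e.symm (QuotientGroup.mk' K k)) = 1
      rw [h1, map_one, map_one]
    have hρL : ∀ l ∈ L, ρ l = l := by
      intro l hl
      have h1 : QuotientGroup.mk' K l = e ⟨l, hl⟩ := rfl
      show L.subtype (e.symm (QuotientGroup.mk' K l)) = l
      rw [h1, MulEquiv.symm_apply_apply]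
      rfl
    set π : MonoidAlgebra F G →ₐ[F] MonoidAlgebra F G := MonoidAlgebra.mapDomainAlgHom F F ρ
      with hπdef
    have hπof : ∀ g : G, π (MonoidAlgebra.single g (1 : F)) = MonoidAlgebra.single (ρ g) (1 : F) := by
      intro g
      simp [hπdef, MonoidAlgebra.mapDomainAlgHom, MonoidAlgebra.mapDomainRingHom,
        Finsupp.mapDomain_single]
    -- π kills DK * Δ^(n-1)
    have hπSK : Submodule.map π.toLinearMap SK = ⊥ := by
      rw [hSKdef, Submodule.map_span, eq_bot_iff, span_le]
      rintro x ⟨y, ⟨k, hk, rfl⟩, rfl⟩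
      show π (MonoidAlgebra.of F G k - 1) ∈ (⊥ : Submodule F (MonoidAlgebra F G))
      rw [Submodule.mem_bot, map_sub, map_one, MonoidAlgebra.of_apply, hπof k, hρK k hk]
      exact sub_self _
    have hπDK : ∀ x ∈ DK * Δ ^ (n - 1), π x = 0 := by
      intro x hx
      have : Submodule.map π.toLinearMap (DK * Δ ^ (n - 1)) = ⊥ := by
        rw [hDK, mul_assoc, Submodule.map_mul, hπSK, Submodule.bot_mul]
      have hx' : π x ∈ Submodule.map π.toLinearMap (DK * Δ ^ (n - 1)) :=
        Submodule.mem_map_of_mem hx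
      rw [this, Submodule.mem_bot] at hx'
      exact hx'
    -- π fixes DL^n
    have hπDL : ∀ x ∈ DL ^ n, π x = x := by
      set E : Subalgebra F (MonoidAlgebra F G) := AlgHom.equalizer π (AlgHom.id F _) with hEdef
      have hDLE : DL ≤ Subalgebra.toSubmodule E := by
        rw [span_le]
        rintro x ⟨l, hl, rfl⟩
        show π _ = _
        rw [AlgHom.coe_id, id_eq, map_sub, map_one, MonoidAlgebra.of_apply, hπof l, hρL l hl]
      have hpow : ∀ m : ℕ, DL ^ m ≤ Subalgebra.toSubmodule E := by
        intro m
        induction m with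
        | zero =>
          rw [pow_zero, Submodule.one_le]
          exact E.one_mem
        | succ m ih =>
          rw [pow_succ, Submodule.mul_le]
          intro a ha b hb
          exact E.mul_mem (ih ha) (hDLE hb)
      intro x hx
      exact hpow n hx
    rw [eq_bot_iff]
    intro x hx
    rw [Submodule.mem_bot]
    have h1 := hπDK x hx.1
    have h2 := hπDL x hx.2
    rw [h2] at h1
    exact h1
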